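/- Let N ⊆ R^n be a linear subspace. There exists a constant C(N) < 1 such that for all a, b ∈ R^n and r ∈ N with sign(a_i) = sign(b_i) for every i and b ∈ N^⊥, one has |⟨r, a⟩| ≤ C(N) · ‖r‖₂ · ‖a‖₂. -/

import Mathlib

open RealInnerProductSpace

private lemma sign_mul_abs' (x : ℝ) : Real.sign x * |x| = x := by
  rcases lt_trichotomy x 0 with h | h | h
  · rw [Real.sign_of_neg h, abs_of_neg h]; ring
  · simp [h]
  · rw [Real.sign_of_pos h, abs_of_pos h]; ring

private lemma mul_sign' (x : ℝ) : x * Real.sign x = |x| := by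
  rcases lt_trichotomy x 0 with h | h | h
  · rw [Real.sign_of_neg h, abs_of_neg h]; ring
  · simp [h]
  · rw [Real.sign_of_pos h, abs_of_pos h]; ring

/-- Key strict inequality on the compact set. -/
private lemma key_lt (n : ℕ) (N : Submodule ℝ (EuclideanSpace ℝ (Fin n)))
    (r a b : EuclideanSpace ℝ (Fin n)) (hr : r ∈ N) (hb : b ∈ Nᗮ)
    (hrn : ‖r‖ = 1) (han : ‖a‖ = 1)
    (hcond : ∀ i, (Real.sign (b i) = 0 → a i = 0) ∧ 0 ≤ a i * Real.sign (b i)) :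
    |⟪r, a⟫| < 1 := by
  have hle : |⟪r, a⟫| ≤ 1 := by
    have := abs_real_inner_le_norm r a
    rwa [hrn, han, mul_one] at this
  rcases lt_or_eq_of_le hle with h | h
  · exact h
  · exfalso
    have hr0 : r ≠ 0 := by intro h0; rw [h0, norm_zero] at hrn; norm_num at hrn
    have ha0 : a ≠ 0 := by intro h0; rw [h0, norm_zero] at han; norm_num at han
    have heq : ‖⟪r, a⟫‖ = ‖r‖ * ‖a‖ := by
      rw [hrn, han, mul_one, Real.norm_eq_abs, h]
    obtain ⟨c, hc0, hca⟩ := (norm_inner_eq_norm_iff hr0 ha0).mp heq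
    -- ⟪a, b⟫ = 0
    have hrb : ⟪r, b⟫ = 0 := Submodule.inner_right_of_mem_orthogonal hr hb
    have hab : ⟪a, b⟫ = 0 := by
      rw [hca, real_inner_smul_left, hrb, mul_zero]
    have hsum : ∑ i, a i * b i = 0 := by
      rw [← hab, PiLp.inner_apply]; simp [mul_comm]
    have hnonneg : ∀ i ∈ Finset.univ, 0 ≤ a i * b i := by
      intro i _
      have : a i * b i = (a i * Real.sign (b i)) * |b i| := by
        rw [mul_assoc, sign_mul_abs']
      rw [this]
      exact mul_nonneg (hcond i).2 (abs_nonneg _)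
    have hzero : ∀ i ∈ Finset.univ, a i * b i = 0 :=
      (Finset.sum_eq_zero_iff_of_nonneg hnonneg).mp hsum
    have hai : ∀ i, a i = 0 := by
      intro i
      by_cases hbi : b i = 0
      · exact (hcond i).1 (by rw [hbi, Real.sign_zero])
      · rcases mul_eq_zero.mp (hzero i (Finset.mem_univ i)) with h1 | h1
        · exact h1
        · exact absurd h1 hbi
    have : ‖a‖ = 0 := by
      rw [EuclideanSpace.norm_eq]
      simp [hai]
    rw [han] at this; norm_num at this

theorem stmt_5 (n : ℕ) (N : Submodule ℝ (EuclideanSpace ℝ (Fin n))) :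
    ∃ C : ℝ, C < 1 ∧
      ∀ (a b : EuclideanSpace ℝ (Fin n)) (r : EuclideanSpace ℝ (Fin n)),
        r ∈ N → b ∈ Nᗮ → (∀ i, Real.sign (a i) = Real.sign (b i)) →
        |⟪r, a⟫| ≤ C * ‖r‖ * ‖a‖ := by
  classical
  set E := EuclideanSpace ℝ (Fin n)
  -- set of sign patterns of N^⊥
  set P : Set (Fin n → ℝ) := (fun b : E => fun i => Real.sign (b i)) '' (Nᗮ : Set E) with hPdef
  have hPfin : P.Finite := by
    apply Set.Finite.subset (Set.Finite.pi (fun i : Fin n =>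
      (Set.finite_singleton (-1 : ℝ)).insert 0 |>.insert 1))
    rintro σ ⟨b, -, rfl⟩
    intro i _
    rcases Real.sign_apply_eq (b i) with h | h | h <;> simp [h]
  -- the compact pieces
  set K : (Fin n → ℝ) → Set (E × E) := fun σ =>
    {p | p.1 ∈ N ∧ ‖p.1‖ = 1 ∧ ‖p.2‖ = 1 ∧
      ∀ i, (σ i = 0 → p.2 i = 0) ∧ 0 ≤ p.2 i * σ i} with hKdef
  have hKclosed : ∀ σ, IsClosed (K σ) := by
    intro σ
    have h1 : IsClosed {p : E × E | p.1 ∈ N} :=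
      (Submodule.closed_of_finiteDimensional N).preimage continuous_fst
    have h2 : IsClosed {p : E × E | ‖p.1‖ = 1} :=
      isClosed_eq (continuous_fst.norm) continuous_const
    have h3 : IsClosed {p : E × E | ‖p.2‖ = 1} :=
      isClosed_eq (continuous_snd.norm) continuous_const
    have h4 : ∀ i, IsClosed {p : E × E | (σ i = 0 → p.2 i = 0) ∧ 0 ≤ p.2 i * σ i} := by
      intro i
      have hcont : Continuous (fun p : E × E => p.2 i) :=
        (EuclideanSpace.proj i).continuous.comp continuous_snd
      by_cases hσ : σ i = 0
      · have heq : {p : E × E | (σ i = 0 → p.2 i = 0) ∧ 0 ≤ p.2 i * σ i} =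
            {p : E × E | p.2 i = 0} := by
          ext p; simp [hσ]
        rw [heq]
        exact isClosed_eq hcont continuous_const
      · have heq : {p : E × E | (σ i = 0 → p.2 i = 0) ∧ 0 ≤ p.2 i * σ i} =
            {p : E × E | 0 ≤ p.2 i * σ i} := by
          ext p; simp [hσ]
        rw [heq]
        exact isClosed_le continuous_const (hcont.mul continuous_const)
    have : K σ = ({p : E × E | p.1 ∈ N} ∩ {p | ‖p.1‖ = 1} ∩ {p | ‖p.2‖ = 1}) ∩
        ⋂ i, {p : E × E | (σ i = 0 → p.2 i = 0) ∧ 0 ≤ p.2 i * σ i} := by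
      ext p
      simp only [hKdef, Set.mem_setOf_eq, Set.mem_inter_iff, Set.mem_iInter]
      tauto
    rw [this]
    exact (((h1.inter h2).inter h3).inter (isClosed_iInter h4))
  have hKcompact : ∀ σ, IsCompact (K σ) := by
    intro σ
    apply (isCompact_closedBall (0 : E × E) 1).of_isClosed_subset (hKclosed σ)
    rintro p ⟨-, h1, h2, -⟩
    rw [Metric.mem_closedBall, dist_zero_right, Prod.norm_def, h1, h2]
    norm_num
  set Kall : Set (E × E) := ⋃ σ ∈ P, K σ with hKalldef
  have hKallcompact : IsCompact Kall := hPfin.isCompact_biUnion (fun σ _ => hKcompact σ)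
  have hlt : ∀ p ∈ Kall, |⟪p.1, p.2⟫| < 1 := by
    rintro p hp
    simp only [hKalldef, Set.mem_iUnion] at hp
    obtain ⟨σ, hσP, hpK⟩ := hp
    obtain ⟨b, hb, rfl⟩ := hσP
    obtain ⟨hp1, hp1n, hp2n, hcond⟩ := hpK
    exact key_lt n N p.1 p.2 b hp1 hb hp1n hp2n hcond
  have hcont : Continuous (fun p : E × E => |⟪p.1, p.2⟫|) :=
    (continuous_fst.inner continuous_snd).abs
  -- get uniform bound M < 1
  obtain ⟨M, hM1, hMge⟩ : ∃ M : ℝ, M < 1 ∧ ∀ p ∈ Kall, |⟪p.1, p.2⟫| ≤ M := by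
    rcases Kall.eq_empty_or_nonempty with he | hne
    · exact ⟨0, by norm_num, by simp [he]⟩
    · obtain ⟨p₀, hp₀, hmax⟩ := hKallcompact.exists_isMaxOn hne hcont.continuousOn
      exact ⟨|⟪p₀.1, p₀.2⟫|, hlt p₀ hp₀, fun q hq => hmax hq⟩
  refine ⟨max M (1/2), max_lt hM1 (by norm_num), ?_⟩
  intro a b r hr hb hsign
  have hCpos : (0:ℝ) ≤ max M (1/2) := le_trans (by norm_num) (le_max_right _ _)
  by_cases hr0 : r = 0
  · simp only [hr0, inner_zero_left, abs_zero, norm_zero]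
    positivity
  by_cases ha0 : a = 0
  · simp only [ha0, inner_zero_right, abs_zero, norm_zero]
    simp
  set p : E × E := (‖r‖⁻¹ • r, ‖a‖⁻¹ • a) with hpdef
  have hrn : ‖r‖ ≠ 0 := norm_ne_zero_iff.mpr hr0
  have han : ‖a‖ ≠ 0 := norm_ne_zero_iff.mpr ha0
  have hpK : p ∈ Kall := by
    simp only [hKalldef, Set.mem_iUnion]
    refine ⟨fun i => Real.sign (b i), ⟨b, hb, rfl⟩, ?_⟩
    refine ⟨N.smul_mem _ hr, norm_smul_inv_norm hr0, norm_smul_inv_norm ha0, ?_⟩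
    intro i
    have hp2i : p.2 i = ‖a‖⁻¹ * a i := rfl
    constructor
    · intro hσ0
      have hσ0' : Real.sign (b i) = 0 := hσ0
      rw [hp2i]
      have : a i = 0 := Real.sign_eq_zero_iff.mp (by rw [hsign i]; exact hσ0')
      rw [this, mul_zero]
    · show 0 ≤ p.2 i * Real.sign (b i)
      rw [hp2i, ← hsign i, mul_assoc, mul_sign']
      positivity
  have hple := hMge p hpK
  have hinner : ⟪p.1, p.2⟫ = ‖r‖⁻¹ * (‖a‖⁻¹ * ⟪r, a⟫) := by
    simp only [hpdef, real_inner_smul_left, real_inner_smul_right]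
    ring
  rw [hinner] at hple
  have : |⟪r, a⟫| ≤ M * ‖r‖ * ‖a‖ := by
    rw [abs_mul, abs_mul, abs_inv, abs_inv, abs_norm, abs_norm] at hple
    have h2 : ‖r‖⁻¹ * (‖a‖⁻¹ * |⟪r, a⟫|) ≤ M := hple
    calc |⟪r, a⟫| = (‖r‖⁻¹ * (‖a‖⁻¹ * |⟪r, a⟫|)) * ‖r‖ * ‖a‖ := by
          field_simp
      _ ≤ M * ‖r‖ * ‖a‖ := by
          have h3 : (0:ℝ) ≤ ‖r‖ := norm_nonneg _
          have h4 : (0:ℝ) ≤ ‖a‖ := norm_nonneg _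
          exact mul_le_mul_of_nonneg_right (mul_le_mul_of_nonneg_right h2 h3) h4
  calc |⟪r, a⟫| ≤ M * ‖r‖ * ‖a‖ := this
    _ ≤ max M (1/2) * ‖r‖ * ‖a‖ := by
        have := le_max_left M (1/2)
        have h3 : (0:ℝ) ≤ ‖r‖ := norm_nonneg _
        have h4 : (0:ℝ) ≤ ‖a‖ := norm_nonneg _
        exact mul_le_mul_of_nonneg_right (mul_le_mul_of_nonneg_right this h3) h4
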